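/- Let n = 2 ≤ N, let Ω ⊆ ℝ² be open and connected, and let u : Ω → ℝ^N be a C² immersion solving the tangential system K_P(Du(x))·∇(K∘Du)(x) = 0 on Ω. Then there is a constant c ≥ 2 such that K(Du(x)) = c for every x ∈ Ω. Moreover, if there exists a point x₀ ∈ Ω at which S(Du(x₀)ᵀDu(x₀)) = 0, then c = 2 and u is conformal on Ω, i.e. Du(x)ᵀDu(x) = (|Du(x)|²/2)·I for all x ∈ Ω. -/

import Mathlib

open Matrix

/-- The dilation function `K(P) = |P|² / det(PᵀP)^(1/n)`, where `|P|² = tr(PᵀP)`. -/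
noncomputable def dil {N n : ℕ} (P : Matrix (Fin N) (Fin n) ℝ) : ℝ :=
  (Pᵀ * P).trace / (Pᵀ * P).det ^ ((1 : ℝ) / n)

/-- The Ahlfors operator `S(A) = (A + Aᵀ)/2 − (tr(A)/n)·I`. -/
noncomputable def ahl {n : ℕ} (A : Matrix (Fin n) (Fin n) ℝ) : Matrix (Fin n) (Fin n) ℝ :=
  (2⁻¹ : ℝ) • (A + Aᵀ) - (A.trace / (n : ℝ)) • 1

/-- `K_P(P) = 2·P·(PᵀP)⁻¹·S(PᵀP)/det(PᵀP)^(1/n)`. -/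
noncomputable def dilGrad {N n : ℕ} (P : Matrix (Fin N) (Fin n) ℝ) : Matrix (Fin N) (Fin n) ℝ :=
  (2 / (Pᵀ * P).det ^ ((1 : ℝ) / n)) • (P * (Pᵀ * P)⁻¹ * ahl (Pᵀ * P))

/-- The Jacobian matrix `Du(x) ∈ ℝ^{N×n}` of a map `u : ℝⁿ → ℝ^N`. -/
noncomputable def jac {n N : ℕ} (u : EuclideanSpace ℝ (Fin n) → (Fin N → ℝ))
    (x : EuclideanSpace ℝ (Fin n)) : Matrix (Fin N) (Fin n) ℝ :=
  Matrix.of fun α i => fderiv ℝ u x (EuclideanSpace.single i 1) α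

/-- The gradient of a scalar function on `ℝⁿ`. -/
noncomputable def egrad {n : ℕ} (f : EuclideanSpace ℝ (Fin n) → ℝ)
    (x : EuclideanSpace ℝ (Fin n)) : Fin n → ℝ :=
  fun i => fderiv ℝ f x (EuclideanSpace.single i 1)

section Alg
variable {N : ℕ} (P : Matrix (Fin N) (Fin 2) ℝ)

lemma sym_off : (Pᵀ * P) 1 0 = (Pᵀ * P) 0 1 := by
  simp [Matrix.mul_apply, mul_comm]

lemma diag_nonneg (i : Fin 2) : 0 ≤ (Pᵀ * P) i i := by
  simp only [Matrix.mul_apply, Matrix.transpose_apply]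
  exact Finset.sum_nonneg fun α _ => mul_self_nonneg _

lemma diag_pos (hdet : 0 < (Pᵀ * P).det) (i : Fin 2) : 0 < (Pᵀ * P) i i := by
  rw [det_fin_two, sym_off] at hdet
  have h1 : (0:ℝ) < (Pᵀ * P) 0 0 * (Pᵀ * P) 1 1 := by nlinarith [mul_self_nonneg ((Pᵀ * P) 0 1)]
  have h0 := diag_nonneg P 0
  have h2 := diag_nonneg P 1
  have h00 : 0 < (Pᵀ * P) 0 0 := by nlinarith
  have h11 : 0 < (Pᵀ * P) 1 1 := by nlinarith
  fin_cases i
  · exact h00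
  · exact h11

lemma trace_pos (hdet : 0 < (Pᵀ * P).det) : 0 < (Pᵀ * P).trace := by
  rw [trace_fin_two]
  have := diag_pos P hdet 0; have := diag_pos P hdet 1; linarith

lemma dil_eq (hdet : 0 < (Pᵀ * P).det) :
    dil P = (Pᵀ * P).trace / Real.sqrt (Pᵀ * P).det := by
  rw [dil, Real.sqrt_eq_rpow]
  norm_num

lemma amgm (hdet : 0 < (Pᵀ * P).det) :
    2 * Real.sqrt (Pᵀ * P).det ≤ (Pᵀ * P).trace := by
  have htr := trace_pos P hdet
  have h4 : 4 * (Pᵀ * P).det ≤ (Pᵀ * P).trace ^ 2 := by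
    rw [det_fin_two, trace_fin_two, sym_off]; nlinarith [sq_nonneg ((Pᵀ*P) 0 0 - (Pᵀ*P) 1 1), sq_nonneg ((Pᵀ*P) 0 1)]
  nlinarith [Real.sq_sqrt hdet.le, Real.sqrt_nonneg (Pᵀ * P).det]

lemma dil_ge_two (hdet : 0 < (Pᵀ * P).det) : 2 ≤ dil P := by
  rw [dil_eq P hdet, le_div_iff₀ (Real.sqrt_pos.2 hdet)]
  exact amgm P hdet

lemma dil_eq_two_conformal (hdet : 0 < (Pᵀ * P).det) (h : dil P = 2) :
    Pᵀ * P = ((Pᵀ * P).trace / 2) • (1 : Matrix (Fin 2) (Fin 2) ℝ) := by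
  rw [dil_eq P hdet, div_eq_iff (ne_of_gt (Real.sqrt_pos.2 hdet))] at h
  have h4 : (Pᵀ * P).trace ^ 2 = 4 * (Pᵀ * P).det := by
    have hs := Real.sq_sqrt hdet.le
    calc (Pᵀ * P).trace ^ 2 = 4 * (Real.sqrt (Pᵀ * P).det ^ 2) := by rw [h]; ring
    _ = 4 * (Pᵀ * P).det := by rw [hs]
  have hoff := sym_off P
  rw [det_fin_two, trace_fin_two] at h4
  rw [hoff] at h4
  have h00 : (Pᵀ*P) 0 0 = (Pᵀ*P) 1 1 := by nlinarith [sq_nonneg ((Pᵀ*P) 0 0 - (Pᵀ*P) 1 1), sq_nonneg ((Pᵀ*P) 0 1)]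
  have h01 : (Pᵀ*P) 0 1 = 0 := by nlinarith [sq_nonneg ((Pᵀ*P) 0 0 - (Pᵀ*P) 1 1), sq_nonneg ((Pᵀ*P) 0 1)]
  have h10 : (Pᵀ*P) 1 0 = 0 := by rw [hoff]; exact h01
  ext i j
  rw [trace_fin_two]
  fin_cases i <;> fin_cases j <;>
      simp [Matrix.smul_apply, Matrix.one_apply, h01, h10] <;> linarith

lemma ahl_entries (A : Matrix (Fin 2) (Fin 2) ℝ) (i j : Fin 2) :
    ahl A i j = 2⁻¹ * (A i j + A j i) - (A 0 0 + A 1 1) / 2 * (if i = j then 1 else 0) := by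
  simp [ahl, Matrix.one_apply, trace_fin_two, Matrix.sub_apply, Matrix.smul_apply,
    Matrix.add_apply, Matrix.transpose_apply]
  ring

lemma ahl_zero_dil_two (hdet : 0 < (Pᵀ * P).det) (h : ahl (Pᵀ * P) = 0) : dil P = 2 := by
  have h00 : ahl (Pᵀ*P) 0 0 = 0 := by rw [h]; rfl
  have h01 : ahl (Pᵀ*P) 0 1 = 0 := by rw [h]; rfl
  rw [ahl_entries] at h00 h01
  simp at h00 h01
  have hoff := sym_off P
  have he : (Pᵀ*P) 0 0 = (Pᵀ*P) 1 1 := by linarith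
  have ho : (Pᵀ*P) 0 1 = 0 := by rw [hoff] at h01; linarith
  rw [dil_eq P hdet, trace_fin_two]
  have hd : (Pᵀ*P).det = (Pᵀ*P) 0 0 ^ 2 := by rw [det_fin_two, hoff, ho, he]; ring
  have hpos := diag_pos P hdet 0
  rw [hd, Real.sqrt_sq hpos.le, ← he, div_eq_iff (ne_of_gt hpos)]
  ring

lemma tang_inj (hdet : 0 < (Pᵀ * P).det) (hS : ahl (Pᵀ * P) ≠ 0) (v : Fin 2 → ℝ)
    (hv : (dilGrad P).mulVec v = 0) : v = 0 := by
  have hk : (0:ℝ) < 2 / (Pᵀ * P).det ^ ((1 : ℝ) / (2:ℕ)) :=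
    div_pos two_pos (Real.rpow_pos_of_pos hdet _)
  rw [dilGrad, Matrix.smul_mulVec] at hv
  have hW : (P * (Pᵀ * P)⁻¹ * ahl (Pᵀ * P)) *ᵥ v = 0 :=
    (smul_eq_zero.mp hv).resolve_left (ne_of_gt hk)
  have hunit : IsUnit (Pᵀ * P).det := isUnit_iff_ne_zero.2 (ne_of_gt hdet)
  have hPS : Pᵀ * (P * (Pᵀ * P)⁻¹ * ahl (Pᵀ * P)) = ahl (Pᵀ * P) := by
    simp only [← Matrix.mul_assoc]
    rw [Matrix.mul_nonsing_inv _ hunit, Matrix.one_mul]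
  have hSv : (ahl (Pᵀ * P)) *ᵥ v = 0 := by
    rw [← hPS, ← Matrix.mulVec_mulVec, hW, Matrix.mulVec_zero]
  set S := ahl (Pᵀ * P) with hSdef
  have e00 : S 1 1 = - S 0 0 := by rw [hSdef, ahl_entries, ahl_entries]; simp; ring
  have e10 : S 1 0 = S 0 1 := by rw [hSdef, ahl_entries, ahl_entries, sym_off]; simp
  have hdS : S.det ≠ 0 := by
    rw [det_fin_two, e00, e10]
    intro hcontr
    have h1 : S 0 0 = 0 := by nlinarith [sq_nonneg (S 0 0), sq_nonneg (S 0 1)]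
    have h2 : S 0 1 = 0 := by nlinarith [sq_nonneg (S 0 0), sq_nonneg (S 0 1)]
    apply hS
    ext i j
    fin_cases i <;> fin_cases j <;> simp [← hSdef, h1, h2, e00, e10]
  calc v = (S⁻¹ * S) *ᵥ v := by
          rw [Matrix.nonsing_inv_mul _ (isUnit_iff_ne_zero.2 hdS), Matrix.one_mulVec]
    _ = S⁻¹ *ᵥ (S *ᵥ v) := by rw [Matrix.mulVec_mulVec]
    _ = 0 := by rw [hSv, Matrix.mulVec_zero]

variable {u : EuclideanSpace ℝ (Fin 2) → (Fin N → ℝ)} {x : EuclideanSpace ℝ (Fin 2)}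

lemma jac_entry_diff (hu : ContDiffAt ℝ 2 u x) (α : Fin N) (i : Fin 2) :
    DifferentiableAt ℝ (fun y => jac u y α i) x := by
  have hfd : ContDiffAt ℝ 1 (fderiv ℝ u) x := hu.fderiv_right (by norm_num)
  have hd : DifferentiableAt ℝ (fderiv ℝ u) x := hfd.differentiableAt one_ne_zero
  have happ : DifferentiableAt ℝ (fun y => fderiv ℝ u y (EuclideanSpace.single i 1)) x :=
    hd.clm_apply (differentiableAt_const _)
  exact (differentiableAt_pi.1 happ) α

lemma B_entry_diff (hu : ContDiffAt ℝ 2 u x) (i j : Fin 2) :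
    DifferentiableAt ℝ (fun y => ((jac u y)ᵀ * jac u y) i j) x := by
  simp only [Matrix.mul_apply, Matrix.transpose_apply]
  exact DifferentiableAt.fun_sum fun α _ => (jac_entry_diff hu α i).mul (jac_entry_diff hu α j)

lemma dil_diffAt (hu : ContDiffAt ℝ 2 u x) (hdet : 0 < ((jac u x)ᵀ * jac u x).det) :
    DifferentiableAt ℝ (fun y => dil (jac u y)) x := by
  have hB := B_entry_diff hu
  have hT : DifferentiableAt ℝ (fun y => ((jac u y)ᵀ * jac u y).trace) x := by
    simp only [trace_fin_two]; exact (hB 0 0).add (hB 1 1)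
  have hD : DifferentiableAt ℝ (fun y => ((jac u y)ᵀ * jac u y).det) x := by
    simp only [det_fin_two]; exact ((hB 0 0).mul (hB 1 1)).sub ((hB 0 1).mul (hB 1 0))
  have hrpow : DifferentiableAt ℝ
      (fun y => ((jac u y)ᵀ * jac u y).det ^ ((1:ℝ)/(2:ℕ))) x :=
    hD.rpow_const (Or.inl (ne_of_gt hdet))
  have hne : ((jac u x)ᵀ * jac u x).det ^ ((1:ℝ)/(2:ℕ)) ≠ 0 :=
    ne_of_gt (Real.rpow_pos_of_pos hdet ((1:ℝ)/(2:ℕ)))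
  have h2 : DifferentiableAt ℝ
      (fun y => ((jac u y)ᵀ * jac u y).trace *
        (((jac u y)ᵀ * jac u y).det ^ ((1:ℝ)/(2:ℕ)))⁻¹) x :=
    hT.mul (hrpow.inv hne)
  have h3 : (fun y => dil (jac u y)) =
      (fun y => ((jac u y)ᵀ * jac u y).trace *
        (((jac u y)ᵀ * jac u y).det ^ ((1:ℝ)/(2:ℕ)))⁻¹) := by
    funext y; rw [dil, div_eq_mul_inv]
  rw [h3]
  exact h2

end Alg

lemma clm_eq_zero (L : EuclideanSpace ℝ (Fin 2) →L[ℝ] ℝ)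
    (h0 : L (EuclideanSpace.single 0 1) = 0) (h1 : L (EuclideanSpace.single 1 1) = 0) :
    L = 0 := by
  apply ContinuousLinearMap.ext
  intro v
  have hv : v = v 0 • EuclideanSpace.single (0 : Fin 2) (1:ℝ)
      + v 1 • EuclideanSpace.single (1 : Fin 2) (1:ℝ) := by
    ext j
    fin_cases j <;> simp [EuclideanSpace.single_apply]
  rw [hv]
  simp [h0, h1]

theorem two_dim_constant_dilation (N : ℕ) (hN : 2 ≤ N)
    (Ω : Set (EuclideanSpace ℝ (Fin 2))) (hΩ : IsOpen Ω) (hconn : IsConnected Ω)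
    (u : EuclideanSpace ℝ (Fin 2) → (Fin N → ℝ))
    (hu : ContDiffOn ℝ 2 u Ω)
    (himm : ∀ x ∈ Ω, 0 < ((jac u x)ᵀ * jac u x).det)
    (htang : ∀ x ∈ Ω, (dilGrad (jac u x)).mulVec (egrad (fun y => dil (jac u y)) x) = 0) :
    ∃ c : ℝ, 2 ≤ c ∧ (∀ x ∈ Ω, dil (jac u x) = c) ∧
      ((∃ x₀ ∈ Ω, ahl ((jac u x₀)ᵀ * jac u x₀) = 0) →
        c = 2 ∧ ∀ x ∈ Ω,
          (jac u x)ᵀ * jac u x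
            = ((((jac u x)ᵀ * jac u x).trace) / 2) • (1 : Matrix (Fin 2) (Fin 2) ℝ)) := by
  have hCD : ∀ x ∈ Ω, ContDiffAt ℝ 2 u x := fun x hx => hu.contDiffAt (hΩ.mem_nhds hx)
  have hdiff : ∀ x ∈ Ω, DifferentiableAt ℝ (fun y => dil (jac u y)) x :=
    fun x hx => dil_diffAt (hCD x hx) (himm x hx)
  have hge : ∀ x ∈ Ω, 2 ≤ dil (jac u x) := fun x hx => dil_ge_two _ (himm x hx)
  have hfderiv : ∀ x ∈ Ω, fderiv ℝ (fun y => dil (jac u y)) x = 0 := by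
    intro x hx
    by_cases hS : ahl ((jac u x)ᵀ * jac u x) = 0
    · have h2 : dil (jac u x) = 2 := ahl_zero_dil_two _ (himm x hx) hS
      have hmin : IsLocalMin (fun y => dil (jac u y)) x := by
        filter_upwards [hΩ.mem_nhds hx] with y hy
        show dil (jac u x) ≤ dil (jac u y)
        rw [h2]; exact hge y hy
      exact hmin.fderiv_eq_zero
    · have hzero : egrad (fun y => dil (jac u y)) x = 0 :=
        tang_inj _ (himm x hx) hS _ (htang x hx)
      apply clm_eq_zero
      · have := congrFun hzero 0; simpa [egrad] using this
      · have := congrFun hzero 1; simpa [egrad] using this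
  have hloc : ∀ x ∈ Ω, ∀ᶠ y in nhds x, dil (jac u y) = dil (jac u x) := by
    intro x hx
    obtain ⟨ε, hε, hball⟩ := Metric.isOpen_iff.1 hΩ x hx
    filter_upwards [Metric.ball_mem_nhds x hε] with y hy
    exact ((convex_ball x ε).is_const_of_fderivWithin_eq_zero
      (fun z hz => (hdiff z (hball hz)).differentiableWithinAt)
      (fun z hz => by
        rw [fderivWithin_of_isOpen Metric.isOpen_ball hz]; exact hfderiv z (hball hz))
      hy (Metric.mem_ball_self hε))
  obtain ⟨x₁, hx₁⟩ := hconn.nonempty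
  set c := dil (jac u x₁) with hc
  have hconst : ∀ x ∈ Ω, dil (jac u x) = c := by
    set U : Set (EuclideanSpace ℝ (Fin 2)) := {y | y ∈ Ω ∧ dil (jac u y) = c} with hU
    set V : Set (EuclideanSpace ℝ (Fin 2)) := {y | y ∈ Ω ∧ dil (jac u y) ≠ c} with hV
    have hUopen : IsOpen U := by
      rw [isOpen_iff_mem_nhds]
      rintro y ⟨hyΩ, hyc⟩
      filter_upwards [hloc y hyΩ, hΩ.mem_nhds hyΩ] with z hz hzΩ
      exact ⟨hzΩ, by rw [hz, hyc]⟩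
    have hVopen : IsOpen V := by
      rw [isOpen_iff_mem_nhds]
      rintro y ⟨hyΩ, hyc⟩
      filter_upwards [hloc y hyΩ, hΩ.mem_nhds hyΩ] with z hz hzΩ
      exact ⟨hzΩ, by rw [hz]; exact hyc⟩
    have hdisj : Disjoint U V := by
      rw [Set.disjoint_left]
      rintro y ⟨_, h1⟩ ⟨_, h2⟩
      exact h2 h1
    have hsub : Ω ⊆ U ∪ V := by
      intro y hy
      by_cases h : dil (jac u y) = c
      · exact Or.inl ⟨hy, h⟩
      · exact Or.inr ⟨hy, h⟩
    have hΩU : Ω ⊆ U :=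
      hconn.isPreconnected.subset_left_of_subset_union hUopen hVopen hdisj hsub
        ⟨x₁, hx₁, hx₁, rfl⟩
    exact fun x hx => (hΩU hx).2
  refine ⟨c, hge x₁ hx₁, hconst, ?_⟩
  rintro ⟨x₀, hx₀, hahl⟩
  have hc2 : c = 2 := by
    rw [← hconst x₀ hx₀]
    exact ahl_zero_dil_two _ (himm x₀ hx₀) hahl
  refine ⟨hc2, fun x hx => dil_eq_two_conformal _ (himm x hx) ?_⟩
  rw [hconst x hx, hc2]
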